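/- For x ∈ ℝ⁶, let Σ(x) = { v ∈ ℝ⁶ : v₁ + x₄·v₅ = 0, v₂ + x₅·v₆ = 0, v₃ + x₆·v₄ = 0 }. Then for every x ∈ ℝ⁶, Σ(x) is 3-dimensional, and for every pair of linearly independent vectors u, v ∈ Σ(x), the three numbers u₄v₅ − u₅v₄, u₅v₆ − u₆v₅, u₆v₄ − u₄v₆ are not all zero; consequently there is no 2-dimensional subspace of Σ(x) on which all three alternating forms vanish identically. -/

import Mathlib

namespace Stmt13Aux

/-- The linear map whose kernel is `Σ(x)`. -/
def f (x : Fin 6 → ℝ) : (Fin 6 → ℝ) →ₗ[ℝ] (Fin 3 → ℝ) where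
  toFun v := ![v 0 + x 3 * v 4, v 1 + x 4 * v 5, v 2 + x 5 * v 3]
  map_add' u v := by
    funext i; fin_cases i <;> simp <;> ring
  map_smul' c v := by
    funext i; fin_cases i <;> simp <;> ring

lemma mem_ker_iff (x v : Fin 6 → ℝ) :
    f x v = 0 ↔ (v 0 + x 3 * v 4 = 0 ∧ v 1 + x 4 * v 5 = 0 ∧ v 2 + x 5 * v 3 = 0) := by
  constructor
  · intro h
    refine ⟨by simpa [f] using congrFun h 0, by simpa [f] using congrFun h 1,
      by simpa [f] using congrFun h 2⟩
  · rintro ⟨h0, h1, h2⟩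
    funext j; fin_cases j <;> simp [f, h0, h1, h2]

lemma partB (x : Fin 6 → ℝ) (u v : Fin 6 → ℝ)
    (hu : u 0 + x 3 * u 4 = 0 ∧ u 1 + x 4 * u 5 = 0 ∧ u 2 + x 5 * u 3 = 0)
    (hv : v 0 + x 3 * v 4 = 0 ∧ v 1 + x 4 * v 5 = 0 ∧ v 2 + x 5 * v 3 = 0)
    (hind : LinearIndependent ℝ ![u, v]) :
    ¬(u 3 * v 4 - u 4 * v 3 = 0 ∧ u 4 * v 5 - u 5 * v 4 = 0 ∧
      u 5 * v 3 - u 3 * v 5 = 0) := by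
  rintro ⟨m1, m2, m3⟩
  rw [LinearIndependent.pair_iff] at hind
  obtain ⟨hu0, hu1, hu2⟩ := hu
  obtain ⟨hv0, hv1, hv2⟩ := hv
  by_cases h3 : u 3 = 0
  · by_cases h4 : u 4 = 0
    · by_cases h5 : u 5 = 0
      · -- then u = 0, contradicting linear independence
        have key : (1 : ℝ) • u + (0 : ℝ) • v = 0 := by
          funext j
          fin_cases j
          · show (1:ℝ) * u 0 + 0 * v 0 = 0; linear_combination hu0 - x 3 * h4
          · show (1:ℝ) * u 1 + 0 * v 1 = 0; linear_combination hu1 - x 4 * h5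
          · show (1:ℝ) * u 2 + 0 * v 2 = 0; linear_combination hu2 - x 5 * h3
          · show (1:ℝ) * u 3 + 0 * v 3 = 0; linear_combination h3
          · show (1:ℝ) * u 4 + 0 * v 4 = 0; linear_combination h4
          · show (1:ℝ) * u 5 + 0 * v 5 = 0; linear_combination h5
        exact one_ne_zero (hind 1 0 key).1
      · -- u 5 ≠ 0
        have key : (-(v 5)) • u + (u 5) • v = 0 := by
          funext j
          fin_cases j
          · show -(v 5) * u 0 + u 5 * v 0 = 0
            linear_combination (-(v 5)) * hu0 + (u 5) * hv0 + x 3 * m2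
          · show -(v 5) * u 1 + u 5 * v 1 = 0
            linear_combination (-(v 5)) * hu1 + (u 5) * hv1
          · show -(v 5) * u 2 + u 5 * v 2 = 0
            linear_combination (-(v 5)) * hu2 + (u 5) * hv2 - x 5 * m3
          · show -(v 5) * u 3 + u 5 * v 3 = 0; linear_combination m3
          · show -(v 5) * u 4 + u 5 * v 4 = 0; linear_combination -m2
          · show -(v 5) * u 5 + u 5 * v 5 = 0; ring
        exact h5 (hind _ _ key).2
    · -- u 4 ≠ 0
      have key : (-(v 4)) • u + (u 4) • v = 0 := by
        funext j
        fin_cases j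
        · show -(v 4) * u 0 + u 4 * v 0 = 0
          linear_combination (-(v 4)) * hu0 + (u 4) * hv0
        · show -(v 4) * u 1 + u 4 * v 1 = 0
          linear_combination (-(v 4)) * hu1 + (u 4) * hv1 - x 4 * m2
        · show -(v 4) * u 2 + u 4 * v 2 = 0
          linear_combination (-(v 4)) * hu2 + (u 4) * hv2 + x 5 * m1
        · show -(v 4) * u 3 + u 4 * v 3 = 0; linear_combination -m1
        · show -(v 4) * u 4 + u 4 * v 4 = 0; ring
        · show -(v 4) * u 5 + u 4 * v 5 = 0; linear_combination m2
      exact h4 (hind _ _ key).2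
  · -- u 3 ≠ 0
    have key : (-(v 3)) • u + (u 3) • v = 0 := by
      funext j
      fin_cases j
      · show -(v 3) * u 0 + u 3 * v 0 = 0
        linear_combination (-(v 3)) * hu0 + (u 3) * hv0 - x 3 * m1
      · show -(v 3) * u 1 + u 3 * v 1 = 0
        linear_combination (-(v 3)) * hu1 + (u 3) * hv1 + x 4 * m3
      · show -(v 3) * u 2 + u 3 * v 2 = 0
        linear_combination (-(v 3)) * hu2 + (u 3) * hv2
      · show -(v 3) * u 3 + u 3 * v 3 = 0; ring
      · show -(v 3) * u 4 + u 3 * v 4 = 0; linear_combination m1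
      · show -(v 3) * u 5 + u 3 * v 5 = 0; linear_combination -m3
    exact h3 (hind _ _ key).2

end Stmt13Aux

open Stmt13Aux in
/-- `Σ(x) = {v | v₁ + x₄v₅ = 0, v₂ + x₅v₆ = 0, v₃ + x₆v₄ = 0}` is a 3-dimensional
subspace of `ℝ⁶`; on any two linearly independent vectors of `Σ(x)` the three forms
`dx₄∧dx₅`, `dx₅∧dx₆`, `dx₆∧dx₄` do not all vanish, so no 2-dimensional subspace of
`Σ(x)` is an integral element. -/
theorem stmt_13 (x : Fin 6 → ℝ) :
    (∃ S : Submodule ℝ (Fin 6 → ℝ),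
      (S : Set (Fin 6 → ℝ)) =
        {v | v 0 + x 3 * v 4 = 0 ∧ v 1 + x 4 * v 5 = 0 ∧ v 2 + x 5 * v 3 = 0} ∧
      Module.finrank ℝ S = 3) ∧
    (∀ u v : Fin 6 → ℝ,
      u ∈ {v : Fin 6 → ℝ | v 0 + x 3 * v 4 = 0 ∧ v 1 + x 4 * v 5 = 0 ∧ v 2 + x 5 * v 3 = 0} →
      v ∈ {v : Fin 6 → ℝ | v 0 + x 3 * v 4 = 0 ∧ v 1 + x 4 * v 5 = 0 ∧ v 2 + x 5 * v 3 = 0} →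
      LinearIndependent ℝ ![u, v] →
      ¬(u 3 * v 4 - u 4 * v 3 = 0 ∧ u 4 * v 5 - u 5 * v 4 = 0 ∧
        u 5 * v 3 - u 3 * v 5 = 0)) ∧
    ¬ ∃ E : Submodule ℝ (Fin 6 → ℝ),
      (E : Set (Fin 6 → ℝ)) ⊆
        {v | v 0 + x 3 * v 4 = 0 ∧ v 1 + x 4 * v 5 = 0 ∧ v 2 + x 5 * v 3 = 0} ∧
      Module.finrank ℝ E = 2 ∧
      ∀ u ∈ E, ∀ v ∈ E,
        u 3 * v 4 - u 4 * v 3 = 0 ∧ u 4 * v 5 - u 5 * v 4 = 0 ∧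
        u 5 * v 3 - u 3 * v 5 = 0 := by
  refine ⟨⟨LinearMap.ker (f x), ?_, ?_⟩, ?_, ?_⟩
  · ext v
    simpa [LinearMap.mem_ker] using mem_ker_iff x v
  · -- finrank of the kernel is 3
    have hsurj : Function.Surjective (f x) := by
      intro w
      refine ⟨![w 0, w 1, w 2, 0, 0, 0], ?_⟩
      funext j
      fin_cases j
      · show w 0 + x 3 * 0 = w 0; ring
      · show w 1 + x 4 * 0 = w 1; ring
      · show w 2 + x 5 * 0 = w 2; ring
    have hrange : LinearMap.range (f x) = ⊤ := LinearMap.range_eq_top.mpr hsurj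
    have h := LinearMap.finrank_range_add_finrank_ker (f x)
    rw [hrange] at h
    simp only [finrank_top, Module.finrank_pi, Fintype.card_fin] at h
    omega
  · intro u v hu hv hind
    exact partB x u v hu hv hind
  · rintro ⟨E, hsub, hrank, hvan⟩
    have b := Module.finBasisOfFinrankEq ℝ E hrank
    have hli : LinearIndependent ℝ (fun i : Fin 2 => ((b i : Fin 6 → ℝ))) :=
      b.linearIndependent.map' E.subtype (Submodule.ker_subtype E)
    have heq : ![((b 0 : Fin 6 → ℝ)), ((b 1 : Fin 6 → ℝ))] =
        (fun i : Fin 2 => ((b i : Fin 6 → ℝ))) := by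
      funext i; fin_cases i <;> rfl
    have hli2 : LinearIndependent ℝ ![((b 0 : Fin 6 → ℝ)), ((b 1 : Fin 6 → ℝ))] := by
      rw [heq]; exact hli
    exact partB x _ _ (hsub (b 0).2) (hsub (b 1).2) hli2
      (hvan _ (b 0).2 _ (b 1).2)
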